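/- For a smooth projective surface X with ample line bundle L of class L, with c1 = c1(TX) and c2 = c2(TX), the second Chern class of the k-th principal parts sheaf of L satisfies c2(P^k_X(L)) = (1/3)·C(k+3,4)·((3L − k·c1)² + 3c2 − c1²), where intersection numbers are taken on X. -/

import Mathlib

/- STATEMENT 1: For a smooth projective surface `X` with line bundle `𝓛` of class `L`,
`c2(P^k_X(𝓛)) = (1/3) C(k+3,4) ((3L − k c1)² + 3c2 − c1²)`.
By the splitting principle we work in a commutative ℚ-algebra (the Chow ring extended so
that `Ω_X` has Chern roots `a, b`; so `c1 = c1(TX) = −(a+b)`, `c2 = c2(TX) = a*b`) and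
`ℓ = c1(𝓛)`.  The Chern classes of the jet bundles are defined by the Whitney formula via
the exact sequences `0 → S^mΩ_X ⊗ 𝓛 → P^m_X(𝓛) → P^{m−1}_X(𝓛) → 0`, where `S^mΩ_X ⊗ 𝓛`
has Chern roots `(m−i)a + i b + ℓ`, `0 ≤ i ≤ m`. -/

variable {A : Type} [CommRing A]

/-- first Chern class of `S^mΩ_X ⊗ 𝓛` -/
def c1Sym (a b ℓ : A) (m : ℕ) : A :=
  ∑ i ∈ Finset.range (m + 1), ((m - i) • a + i • b + ℓ)

/-- second Chern class of `S^mΩ_X ⊗ 𝓛` -/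
def c2Sym (a b ℓ : A) (m : ℕ) : A :=
  ∑ i ∈ Finset.range (m + 1), ∑ j ∈ Finset.Ioo i (m + 1),
    ((m - i) • a + i • b + ℓ) * ((m - j) • a + j • b + ℓ)

/-- `(c1, c2)` of the jet bundle `P^k_X(𝓛)` on a surface, via Whitney's formula. -/
def jetChernSurface (a b ℓ : A) : ℕ → A × A
  | 0 => (ℓ, 0)
  | (k + 1) =>
      (c1Sym a b ℓ (k + 1) + (jetChernSurface a b ℓ k).1,
       c2Sym a b ℓ (k + 1) + c1Sym a b ℓ (k + 1) * (jetChernSurface a b ℓ k).1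
         + (jetChernSurface a b ℓ k).2)

lemma aux_sumId (n : ℕ) : 2 * ∑ i ∈ Finset.range (n + 1), (i : A) = (n : A) * ((n : A) + 1) := by
  induction n with
  | zero => simp
  | succ n ih =>
    rw [Finset.sum_range_succ]
    push_cast
    linear_combination ih

lemma aux_sumSq (n : ℕ) : 6 * ∑ i ∈ Finset.range (n + 1), (i : A) ^ 2
    = (n : A) * ((n : A) + 1) * (2 * (n : A) + 1) := by
  induction n with
  | zero => simp
  | succ n ih =>
    rw [Finset.sum_range_succ]
    push_cast
    linear_combination ih

lemma aux_c1Sym (a b ℓ : A) (m : ℕ) :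
    2 * c1Sym a b ℓ m = (m : A) * ((m : A) + 1) * (a + b) + 2 * ((m : A) + 1) * ℓ := by
  have h : ∀ i ∈ Finset.range (m + 1),
      ((m - i) • a + i • b + ℓ) = ((m : A) * a + ℓ) + (i : A) * (b - a) := by
    intro i hi
    rw [Finset.mem_range] at hi
    rw [nsmul_eq_mul, nsmul_eq_mul, Nat.cast_sub (by omega)]
    ring
  rw [c1Sym, Finset.sum_congr rfl h, Finset.sum_add_distrib, Finset.sum_const,
    Finset.card_range, ← Finset.sum_mul]
  have hs := aux_sumId (A := A) m
  rw [nsmul_eq_mul]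
  push_cast
  linear_combination (b - a) * hs

lemma aux_Q (a b ℓ : A) (m : ℕ) :
    6 * ∑ i ∈ Finset.range (m + 1), ((m - i) • a + i • b + ℓ) ^ 2
    = 6 * ((m : A) + 1) * ((m : A) * a + ℓ) ^ 2
      + 6 * ((m : A) * a + ℓ) * (b - a) * (m : A) * ((m : A) + 1)
      + (b - a) ^ 2 * (m : A) * ((m : A) + 1) * (2 * (m : A) + 1) := by
  have h : ∀ i ∈ Finset.range (m + 1),
      ((m - i) • a + i • b + ℓ) ^ 2 = ((m : A) * a + ℓ) ^ 2
        + (2 * ((m : A) * a + ℓ) * (b - a)) * (i : A) + (b - a) ^ 2 * (i : A) ^ 2 := by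
    intro i hi
    rw [Finset.mem_range] at hi
    rw [nsmul_eq_mul, nsmul_eq_mul, Nat.cast_sub (by omega)]
    ring
  rw [Finset.sum_congr rfl h, Finset.sum_add_distrib, Finset.sum_add_distrib,
    Finset.sum_const, Finset.card_range, ← Finset.mul_sum, ← Finset.mul_sum]
  have hs := aux_sumId (A := A) m
  have hq := aux_sumSq (A := A) m
  rw [nsmul_eq_mul]
  push_cast
  linear_combination (6 * ((m : A) * a + ℓ) * (b - a)) * hs + (b - a) ^ 2 * hq

lemma aux_pair (f : ℕ → A) (n : ℕ) :
    (∑ i ∈ Finset.range n, f i) ^ 2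
      = ∑ i ∈ Finset.range n, f i ^ 2
        + 2 * ∑ i ∈ Finset.range n, ∑ j ∈ Finset.Ioo i n, f i * f j := by
  induction n with
  | zero => simp
  | succ n ih =>
    have hIoo : ∀ i ∈ Finset.range n, Finset.Ioo i (n + 1) = insert n (Finset.Ioo i n) := by
      intro i hi
      rw [Finset.mem_range] at hi
      rw [Finset.Ioo_insert_right hi]
      ext j
      simp [Nat.lt_succ_iff]
    have h2 : ∑ i ∈ Finset.range (n + 1), ∑ j ∈ Finset.Ioo i (n + 1), f i * f j
        = (∑ i ∈ Finset.range n, ∑ j ∈ Finset.Ioo i n, f i * f j)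
          + (∑ i ∈ Finset.range n, f i) * f n := by
      rw [Finset.sum_range_succ]
      have : Finset.Ioo n (n + 1) = ∅ := by
        ext j; simp
      rw [this, Finset.sum_empty, add_zero]
      rw [Finset.sum_congr rfl fun i hi => by
        rw [hIoo i hi, Finset.sum_insert (by simp)]]
      rw [Finset.sum_add_distrib, ← Finset.sum_mul]
      ring
    rw [Finset.sum_range_succ, Finset.sum_range_succ (f := fun i => f i ^ 2), h2]
    linear_combination ih

lemma aux_2c2 (a b ℓ : A) (m : ℕ) :
    2 * c2Sym a b ℓ m
      = (c1Sym a b ℓ m) ^ 2 - ∑ i ∈ Finset.range (m + 1), ((m - i) • a + i • b + ℓ) ^ 2 := by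
  have := aux_pair (fun i => (m - i) • a + i • b + ℓ) (m + 1)
  rw [c2Sym, c1Sym]
  linear_combination -this

lemma aux_jet1 (a b ℓ : A) (k : ℕ) :
    6 * (jetChernSurface a b ℓ k).1
      = (k : A) * ((k : A) + 1) * ((k : A) + 2) * (a + b)
        + 3 * ((k : A) + 1) * ((k : A) + 2) * ℓ := by
  induction k with
  | zero => simp [jetChernSurface]; ring
  | succ k ih =>
    have hc := aux_c1Sym a b ℓ (k + 1)
    simp only [jetChernSurface]
    push_cast [Nat.cast_succ] at hc ⊢
    linear_combination 3 * hc + ih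

lemma aux_main (a b ℓ : A) (k : ℕ) :
    72 * (jetChernSurface a b ℓ k).2
      = (k : A) * ((k : A) + 1) * ((k : A) + 2) * ((k : A) + 3)
        * ((3 * ℓ + (k : A) * (a + b)) ^ 2 + 3 * (a * b) - (a + b) ^ 2) := by
  induction k with
  | zero => simp [jetChernSurface]
  | succ k ih =>
    have hc := aux_c1Sym a b ℓ (k + 1)
    have hQ := aux_Q a b ℓ (k + 1)
    have h2 := aux_2c2 a b ℓ (k + 1)
    have hP := aux_jet1 a b ℓ k
    have hsq : 4 * (c1Sym a b ℓ (k + 1)) ^ 2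
        = (((k : A) + 1) * (((k : A) + 1) + 1) * (a + b) + 2 * (((k : A) + 1) + 1) * ℓ) ^ 2 := by
      push_cast at hc
      linear_combination (2 * c1Sym a b ℓ (k + 1)
        + (((k : A) + 1) * (((k : A) + 1) + 1) * (a + b) + 2 * (((k : A) + 1) + 1) * ℓ)) * hc
    simp only [jetChernSurface]
    push_cast at hc hQ h2 hP hsq ⊢
    linear_combination 36 * h2 + 9 * hsq - 6 * hQ + ih
      + (6 * ((k : A) * ((k : A) + 1) * ((k : A) + 2) * (a + b)
          + 3 * ((k : A) + 1) * ((k : A) + 2) * ℓ)) * hc + 12 * c1Sym a b ℓ (k + 1) * hP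

lemma aux_ch2 (k : ℕ) : (((k + 1).choose 2 : ℚ)) * 2 = (k + 1) * k := by
  induction k with
  | zero => simp
  | succ k ih =>
    rw [show k + 1 + 1 = (k + 1) + 1 from rfl, Nat.choose_succ_succ]
    push_cast [Nat.choose_one_right]
    linear_combination ih

lemma aux_ch3 (k : ℕ) : (((k + 2).choose 3 : ℚ)) * 6 = (k + 2) * (k + 1) * k := by
  induction k with
  | zero => simp
  | succ k ih =>
    rw [show k + 1 + 2 = (k + 2) + 1 from rfl, Nat.choose_succ_succ]
    have h2 := aux_ch2 (k + 1)
    push_cast at h2 ⊢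
    linear_combination ih + 3 * h2

lemma aux_ch4 (k : ℕ) : (((k + 3).choose 4 : ℚ)) * 24 = (k + 3) * (k + 2) * (k + 1) * k := by
  induction k with
  | zero => simp
  | succ k ih =>
    rw [show k + 1 + 3 = (k + 3) + 1 from rfl, Nat.choose_succ_succ]
    have h3 := aux_ch3 (k + 1)
    push_cast at h3 ⊢
    linear_combination ih + 4 * h3

theorem c2_jet_surface (A : Type) [CommRing A] [Algebra ℚ A] (a b ℓ : A) (k : ℕ) :
    (jetChernSurface a b ℓ k).2 =
      algebraMap ℚ A (((k + 3).choose 4 : ℚ) / 3) *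
        ((3 * ℓ - (k : A) * (-(a + b))) ^ 2 + 3 * (a * b) - (a + b) ^ 2) := by
  have h := aux_main a b ℓ k
  have hch : (((k + 3).choose 4 : ℚ)) / 3 = (1 / 72) * (((k : ℚ) + 3) * ((k : ℚ) + 2) * ((k : ℚ) + 1) * (k : ℚ)) := by
    have h4 := aux_ch4 k
    push_cast at h4
    linear_combination (1 / 72 : ℚ) * h4
  have hinv : algebraMap ℚ A (1 / 72) * 72 = 1 := by
    have : (72 : A) = algebraMap ℚ A 72 := (map_ofNat (algebraMap ℚ A) 72).symm
    rw [this, ← map_mul]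
    norm_num
  have hq : algebraMap ℚ A (((k : ℚ) + 3) * ((k : ℚ) + 2) * ((k : ℚ) + 1) * (k : ℚ))
      = ((k : A) + 3) * ((k : A) + 2) * ((k : A) + 1) * (k : A) := by
    simp [map_mul, map_add, map_ofNat]
  calc (jetChernSurface a b ℓ k).2
      = algebraMap ℚ A (1 / 72) * (72 * (jetChernSurface a b ℓ k).2) := by
        rw [← mul_assoc, hinv, one_mul]
    _ = _ := by
        rw [h, hch, map_mul, hq]
        ring
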